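/- Let a ≥ b > 0 and set k = a/√(a² + b²). Then b − (1/(ab))·∫₀^{ab/√(a²+b²)} ((a² + b²)²x² − a²b²(a² − b²)) / √((a² + b²)²x⁴ − 2a²b²(a² − b²)x² + a⁴b⁴) dx = √(a² + b²)·E(k) − (b²/√(a² + b²))·K(k), where K(k) = ∫₀^{π/2} dθ/√(1 − k² sin²θ) and E(k) = ∫₀^{π/2} √(1 − k² sin²θ) dθ. -/

import Mathlib

open Real

/-- Complete elliptic integral of the first kind. -/
noncomputable def ellipticK (k : ℝ) : ℝ :=
  ∫ θ in (0:ℝ)..(π / 2), 1 / Real.sqrt (1 - k ^ 2 * Real.sin θ ^ 2)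

/-- Complete elliptic integral of the second kind. -/
noncomputable def ellipticE (k : ℝ) : ℝ :=
  ∫ θ in (0:ℝ)..(π / 2), Real.sqrt (1 - k ^ 2 * Real.sin θ ^ 2)

/-- Derivative of the antiderivative `sin θ · Δ / (1 + cos θ)`. -/
lemma antideriv_hasDerivAt (k θ : ℝ) (h1 : 0 < 1 - k ^ 2 * Real.sin θ ^ 2)
    (h2 : 0 < 1 + Real.cos θ) :
    HasDerivAt (fun t => Real.sin t * Real.sqrt (1 - k ^ 2 * Real.sin t ^ 2) / (1 + Real.cos t))
      (Real.sqrt (1 - k ^ 2 * Real.sin θ ^ 2)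
        - Real.cos θ / ((1 + Real.cos θ) * Real.sqrt (1 - k ^ 2 * Real.sin θ ^ 2))) θ := by
  set w := Real.sqrt (1 - k ^ 2 * Real.sin θ ^ 2) with hw
  have hwpos : 0 < w := Real.sqrt_pos.mpr h1
  have hw2 : w ^ 2 = 1 - k ^ 2 * Real.sin θ ^ 2 := Real.sq_sqrt h1.le
  have hinner : HasDerivAt (fun t => 1 - k ^ 2 * Real.sin t ^ 2)
      (-(k ^ 2 * (2 * Real.sin θ * Real.cos θ))) θ := by
    have h := ((Real.hasDerivAt_sin θ).pow 2).const_mul (k ^ 2)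
    have := (hasDerivAt_const θ (1:ℝ)).sub h
    refine this.congr_deriv (Eq.symm ?_)
    ring
  have hsqrt : HasDerivAt (fun t => Real.sqrt (1 - k ^ 2 * Real.sin t ^ 2))
      (-(k ^ 2 * Real.sin θ * Real.cos θ) / w) θ := by
    have h := (Real.hasDerivAt_sqrt h1.ne').comp θ hinner
    refine h.congr_deriv (Eq.symm ?_)
    field_simp
    ring
  have hnum : HasDerivAt (fun t => Real.sin t * Real.sqrt (1 - k ^ 2 * Real.sin t ^ 2))
      (Real.cos θ * w + Real.sin θ * (-(k ^ 2 * Real.sin θ * Real.cos θ) / w)) θ :=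
    (Real.hasDerivAt_sin θ).mul hsqrt
  have hden : HasDerivAt (fun t => 1 + Real.cos t) (-Real.sin θ) θ := by
    simpa using Real.hasDerivAt_cos θ
  have h := hnum.div hden h2.ne'
  refine h.congr_deriv (Eq.symm ?_)
  rw [← hw]
  have hsc : Real.sin θ ^ 2 = 1 - Real.cos θ ^ 2 := by
    have := Real.sin_sq_add_cos_sq θ; linarith
  field_simp
  linear_combination (Real.cos θ * (1 + Real.cos θ)) * hw2
    - w ^ 2 * hsc

/-- Pointwise identity for the substituted integrand. -/
lemma substituted_integrand (a b c k : ℝ) (hb : 0 < b) (ha : 0 < a) (hc : 0 < c)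
    (hc2 : c ^ 2 = a ^ 2 + b ^ 2) (hk2 : k ^ 2 = a ^ 2 / c ^ 2)
    (θ : ℝ) (hθ : θ ∈ Set.Icc (0:ℝ) (π / 2))
    (hΔ : 0 < 1 - k ^ 2 * Real.sin θ ^ 2) :
    a * b / (2 * c) * (1 + Real.tan (θ / 2) ^ 2) *
      (((a ^ 2 + b ^ 2) ^ 2 * (a * b / c * Real.tan (θ / 2)) ^ 2
          - a ^ 2 * b ^ 2 * (a ^ 2 - b ^ 2)) /
        Real.sqrt ((a ^ 2 + b ^ 2) ^ 2 * (a * b / c * Real.tan (θ / 2)) ^ 4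
          - 2 * a ^ 2 * b ^ 2 * (a ^ 2 - b ^ 2) * (a * b / c * Real.tan (θ / 2)) ^ 2
          + a ^ 4 * b ^ 4))
    = a * b ^ 3 / c * (1 / Real.sqrt (1 - k ^ 2 * Real.sin θ ^ 2))
      - a * b * c *
        (Real.cos θ / ((1 + Real.cos θ) * Real.sqrt (1 - k ^ 2 * Real.sin θ ^ 2))) := by
  have hco : 0 < Real.cos (θ / 2) := by
    apply Real.cos_pos_of_mem_Ioo
    constructor
    · linarith [hθ.1, pi_pos]
    · nlinarith [hθ.2, pi_pos]
  set s := Real.sin (θ / 2) with hsdef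
  set co := Real.cos (θ / 2) with hcodef
  have hsc : s ^ 2 + co ^ 2 = 1 := Real.sin_sq_add_cos_sq _
  have hts : Real.tan (θ / 2) = s / co := Real.tan_eq_sin_div_cos _
  have hsin : Real.sin θ = 2 * s * co := by
    rw [show θ = 2 * (θ / 2) by ring, Real.sin_two_mul]
  have hcosθ : Real.cos θ = 2 * co ^ 2 - 1 := by
    rw [show θ = 2 * (θ / 2) by ring, Real.cos_two_mul]
  set Δ := Real.sqrt (1 - k ^ 2 * Real.sin θ ^ 2) with hΔdef
  have hΔp : 0 < Δ := Real.sqrt_pos.mpr hΔ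
  have hΔ2 : Δ ^ 2 = 1 - k ^ 2 * Real.sin θ ^ 2 := Real.sq_sqrt hΔ.le
  have hV : (a ^ 2 + b ^ 2) ^ 2 * (a * b / c * Real.tan (θ / 2)) ^ 4
        - 2 * a ^ 2 * b ^ 2 * (a ^ 2 - b ^ 2) * (a * b / c * Real.tan (θ / 2)) ^ 2
        + a ^ 4 * b ^ 4
      = (a ^ 2 * b ^ 2 / co ^ 2) ^ 2 * (1 - k ^ 2 * Real.sin θ ^ 2) := by
    rw [hts, hsin, ← hc2, hk2]
    field_simp
    ring_nf
    linear_combination (-(2 * co ^ 2 * s ^ 2)) * hc2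
      + (c ^ 2 * (s ^ 2 + co ^ 2 + 1)) * hsc
  rw [hV, Real.sqrt_mul (sq_nonneg _), Real.sqrt_sq (by positivity), ← hΔdef]
  rw [hts, hcosθ, ← hc2]
  field_simp
  ring_nf
  linear_combination (2 * co ^ 4) * hc2
    + (2 * co ^ 2 * (c ^ 2 * s ^ 2 - co ^ 2 * (a ^ 2 - b ^ 2) + c ^ 2)) * hsc

set_option maxHeartbeats 1000000 in
/-- The limit hyperbolic excess in the asymptote-aligned form: `b` minus the
residual integral equals `√(a² + b²)·E(k) − (b²/√(a² + b²))·K(k)`. -/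
theorem excess_asymptote_form (a b : ℝ) (hb : 0 < b) (hab : b ≤ a)
    (k : ℝ) (hk : k = a / Real.sqrt (a ^ 2 + b ^ 2)) :
    b - (1 / (a * b)) *
      ∫ x in (0:ℝ)..(a * b / Real.sqrt (a ^ 2 + b ^ 2)),
        ((a ^ 2 + b ^ 2) ^ 2 * x ^ 2 - a ^ 2 * b ^ 2 * (a ^ 2 - b ^ 2)) /
          Real.sqrt ((a ^ 2 + b ^ 2) ^ 2 * x ^ 4
            - 2 * a ^ 2 * b ^ 2 * (a ^ 2 - b ^ 2) * x ^ 2 + a ^ 4 * b ^ 4)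
      = Real.sqrt (a ^ 2 + b ^ 2) * ellipticE k
        - b ^ 2 / Real.sqrt (a ^ 2 + b ^ 2) * ellipticK k := by
  have ha : 0 < a := lt_of_lt_of_le hb hab
  set c : ℝ := Real.sqrt (a ^ 2 + b ^ 2) with hcdef
  have hab2 : (0:ℝ) < a ^ 2 + b ^ 2 := by positivity
  have hc : 0 < c := Real.sqrt_pos.mpr hab2
  have hc2 : c ^ 2 = a ^ 2 + b ^ 2 := Real.sq_sqrt hab2.le
  have hk2 : k ^ 2 = a ^ 2 / c ^ 2 := by rw [hk, div_pow]
  have hΔpos : ∀ θ : ℝ, 0 < 1 - k ^ 2 * Real.sin θ ^ 2 := by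
    intro θ
    have hs : Real.sin θ ^ 2 ≤ 1 := Real.sin_sq_le_one θ
    have hk1 : k ^ 2 < 1 := by
      rw [hk2, div_lt_one (by positivity)]
      nlinarith
    nlinarith [sq_nonneg (Real.sin θ), sq_nonneg k]
  have hQpos : ∀ x : ℝ, 0 < (a ^ 2 + b ^ 2) ^ 2 * x ^ 4
      - 2 * a ^ 2 * b ^ 2 * (a ^ 2 - b ^ 2) * x ^ 2 + a ^ 4 * b ^ 4 := by
    intro x
    have h : (a ^ 2 + b ^ 2) ^ 2 * x ^ 4 - 2 * a ^ 2 * b ^ 2 * (a ^ 2 - b ^ 2) * x ^ 2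
        + a ^ 4 * b ^ 4 = ((a ^ 2 + b ^ 2) * x ^ 2 - a ^ 2 * b ^ 2) ^ 2
          + (2 * a * b ^ 2 * x) ^ 2 := by ring
    rw [h]
    rcases eq_or_ne x 0 with hx | hx
    · subst hx; simp; positivity
    · have h2 : 0 < (2 * a * b ^ 2 * x) ^ 2 := by positivity
      nlinarith [sq_nonneg ((a ^ 2 + b ^ 2) * x ^ 2 - a ^ 2 * b ^ 2)]
  have hgc : Continuous (fun x : ℝ =>
      ((a ^ 2 + b ^ 2) ^ 2 * x ^ 2 - a ^ 2 * b ^ 2 * (a ^ 2 - b ^ 2)) /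
        Real.sqrt ((a ^ 2 + b ^ 2) ^ 2 * x ^ 4
          - 2 * a ^ 2 * b ^ 2 * (a ^ 2 - b ^ 2) * x ^ 2 + a ^ 4 * b ^ 4)) := by
    apply Continuous.div
    · fun_prop
    · fun_prop
    · exact fun x => (Real.sqrt_pos.mpr (hQpos x)).ne'
  have hcohalf : ∀ θ ∈ Set.uIcc (0:ℝ) (π / 2), 0 < Real.cos (θ / 2) := by
    intro θ hθ
    rw [Set.uIcc_of_le (by positivity)] at hθ
    apply Real.cos_pos_of_mem_Ioo
    constructor
    · linarith [hθ.1, pi_pos]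
    · nlinarith [hθ.2, pi_pos]
  have hfderiv : ∀ θ ∈ Set.uIcc (0:ℝ) (π / 2),
      HasDerivAt (fun t => a * b / c * Real.tan (t / 2))
        (a * b / (2 * c) * (1 + Real.tan (θ / 2) ^ 2)) θ := by
    intro θ hθ
    have hcos := hcohalf θ hθ
    have h1 : HasDerivAt (fun t : ℝ => t / 2) (1 / 2) θ := by
      simpa using (hasDerivAt_id θ).div_const 2
    have h2 := (Real.hasDerivAt_tan hcos.ne').comp θ h1
    have h3 := h2.const_mul (a * b / c)
    refine h3.congr_deriv (Eq.symm ?_)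
    have ht : Real.tan (θ / 2) ^ 2 + 1 = 1 / Real.cos (θ / 2) ^ 2 := by
      rw [Real.tan_eq_sin_div_cos, div_pow, div_add_one (by positivity),
        Real.sin_sq_add_cos_sq, eq_comm]
    rw [← ht]; ring
  have hf'cont : ContinuousOn (fun θ : ℝ => a * b / (2 * c) * (1 + Real.tan (θ / 2) ^ 2))
      (Set.uIcc (0:ℝ) (π / 2)) := by
    intro θ hθ
    have hcos := hcohalf θ hθ
    have : ContinuousAt (fun θ : ℝ => a * b / (2 * c) * (1 + Real.tan (θ / 2) ^ 2)) θ := by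
      apply ContinuousAt.mul continuousAt_const
      apply ContinuousAt.add continuousAt_const
      have h4 : ContinuousAt (fun x : ℝ => x / 2) θ := by fun_prop
      have h5' : ContinuousAt Real.tan (θ / 2) := Real.continuousAt_tan.mpr hcos.ne'
      have h5 : ContinuousAt (fun x : ℝ => Real.tan (x / 2)) θ :=
        ContinuousAt.comp (g := Real.tan) (f := fun x : ℝ => x / 2) (x := θ) h5' h4
      exact h5.pow 2
    exact this.continuousWithinAt
  -- the substitution x = (ab/c) tan(θ/2)
  have hsub := intervalIntegral.integral_comp_smul_deriv hfderiv hf'cont hgc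
  have hf0 : a * b / c * Real.tan ((0:ℝ) / 2) = 0 := by simp
  have hfpi : a * b / c * Real.tan ((π / 2) / 2) = a * b / c := by
    rw [show (π / 2) / 2 = π / 4 by ring, Real.tan_pi_div_four, mul_one]
  rw [hf0, hfpi] at hsub
  -- rewrite the substituted integrand pointwise
  have hcongr : (∫ θ in (0:ℝ)..(π / 2),
        (a * b / (2 * c) * (1 + Real.tan (θ / 2) ^ 2)) •
          ((fun x : ℝ =>
            ((a ^ 2 + b ^ 2) ^ 2 * x ^ 2 - a ^ 2 * b ^ 2 * (a ^ 2 - b ^ 2)) /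
              Real.sqrt ((a ^ 2 + b ^ 2) ^ 2 * x ^ 4
                - 2 * a ^ 2 * b ^ 2 * (a ^ 2 - b ^ 2) * x ^ 2 + a ^ 4 * b ^ 4)) ∘
            (fun t => a * b / c * Real.tan (t / 2))) θ)
      = ∫ θ in (0:ℝ)..(π / 2),
          (a * b ^ 3 / c * (1 / Real.sqrt (1 - k ^ 2 * Real.sin θ ^ 2))
            - a * b * c * (Real.cos θ /
                ((1 + Real.cos θ) * Real.sqrt (1 - k ^ 2 * Real.sin θ ^ 2)))) := by
    apply intervalIntegral.integral_congr
    intro θ hθ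
    rw [Set.uIcc_of_le (by positivity)] at hθ
    simp only [Function.comp, smul_eq_mul]
    exact substituted_integrand a b c k hb ha hc hc2 hk2 θ hθ (hΔpos θ)
  rw [hcongr] at hsub
  -- integrability facts
  have hΔcont : Continuous (fun θ : ℝ => Real.sqrt (1 - k ^ 2 * Real.sin θ ^ 2)) := by
    fun_prop
  have hi2 : IntervalIntegrable (fun θ : ℝ => Real.sqrt (1 - k ^ 2 * Real.sin θ ^ 2))
      MeasureTheory.volume 0 (π / 2) := hΔcont.intervalIntegrable _ _
  have hi1 : IntervalIntegrable (fun θ : ℝ => 1 / Real.sqrt (1 - k ^ 2 * Real.sin θ ^ 2))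
      MeasureTheory.volume 0 (π / 2) := by
    apply Continuous.intervalIntegrable
    exact continuous_const.div hΔcont fun θ => (Real.sqrt_pos.mpr (hΔpos θ)).ne'
  have h1cos : ∀ θ ∈ Set.uIcc (0:ℝ) (π / 2), 0 < 1 + Real.cos θ := by
    intro θ hθ
    rw [Set.uIcc_of_le (by positivity)] at hθ
    have : 0 ≤ Real.cos θ := Real.cos_nonneg_of_mem_Icc
      ⟨by linarith [hθ.1, pi_pos], hθ.2⟩
    linarith
  have hi3 : IntervalIntegrable (fun θ : ℝ => Real.cos θ /
      ((1 + Real.cos θ) * Real.sqrt (1 - k ^ 2 * Real.sin θ ^ 2)))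
      MeasureTheory.volume 0 (π / 2) := by
    apply ContinuousOn.intervalIntegrable
    apply ContinuousOn.div
    · exact Real.continuous_cos.continuousOn
    · exact ((continuous_const.add Real.continuous_cos).mul hΔcont).continuousOn
    · intro θ hθ
      exact mul_ne_zero (h1cos θ hθ).ne' (Real.sqrt_pos.mpr (hΔpos θ)).ne'
  -- split the substituted integral
  have hsplit : (∫ θ in (0:ℝ)..(π / 2),
        (a * b ^ 3 / c * (1 / Real.sqrt (1 - k ^ 2 * Real.sin θ ^ 2))
          - a * b * c * (Real.cos θ /
              ((1 + Real.cos θ) * Real.sqrt (1 - k ^ 2 * Real.sin θ ^ 2)))))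
      = a * b ^ 3 / c * ellipticK k
        - a * b * c * ∫ θ in (0:ℝ)..(π / 2), Real.cos θ /
            ((1 + Real.cos θ) * Real.sqrt (1 - k ^ 2 * Real.sin θ ^ 2)) := by
    rw [intervalIntegral.integral_sub (hi1.const_mul _) (hi3.const_mul _),
      intervalIntegral.integral_const_mul, intervalIntegral.integral_const_mul,
      ellipticK]
  rw [hsplit] at hsub
  -- FTC for the remaining integral
  have hFTC : (∫ θ in (0:ℝ)..(π / 2),
        (Real.sqrt (1 - k ^ 2 * Real.sin θ ^ 2)
          - Real.cos θ / ((1 + Real.cos θ) * Real.sqrt (1 - k ^ 2 * Real.sin θ ^ 2))))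
      = b / c := by
    have hder : ∀ θ ∈ Set.uIcc (0:ℝ) (π / 2),
        HasDerivAt (fun t => Real.sin t * Real.sqrt (1 - k ^ 2 * Real.sin t ^ 2)
            / (1 + Real.cos t))
          (Real.sqrt (1 - k ^ 2 * Real.sin θ ^ 2)
            - Real.cos θ / ((1 + Real.cos θ) * Real.sqrt (1 - k ^ 2 * Real.sin θ ^ 2))) θ :=
      fun θ hθ => antideriv_hasDerivAt k θ (hΔpos θ) (h1cos θ hθ)
    rw [intervalIntegral.integral_eq_sub_of_hasDerivAt hder (hi2.sub hi3)]
    have hval : 1 - k ^ 2 * (1:ℝ) ^ 2 = (b / c) ^ 2 := by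
      rw [one_pow, mul_one, hk2, div_pow]
      field_simp
      linear_combination hc2
    rw [Real.sin_pi_div_two, Real.cos_pi_div_two, Real.sin_zero, hval,
      Real.sqrt_sq (by positivity)]
    norm_num
  have hJ : (∫ θ in (0:ℝ)..(π / 2), Real.cos θ /
        ((1 + Real.cos θ) * Real.sqrt (1 - k ^ 2 * Real.sin θ ^ 2)))
      = ellipticE k - b / c := by
    rw [intervalIntegral.integral_sub hi2 hi3] at hFTC
    rw [ellipticE]
    linarith
  rw [hJ] at hsub
  -- final algebra
  rw [← hsub]
  field_simp
  ring
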